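/- Let S be a set and f : Set S → Set S monotone. Then the least fixpoint of f equals the union of all subsets of S that are well-supported for f: μf = ⋃{X ⊆ S | X admits a well-founded support ordering for f}. -/

import Mathlib

/-- `(X, r)` is a support ordering for `f`. -/
def IsSupportOrdering {S : Type*} (f : Set S → Set S) (X : Set S) (r : S → S → Prop) : Prop :=
  ∀ x ∈ X, x ∈ f {x' ∈ X | r x' x}

/-- `X` is well-supported for `f`: it admits a well-founded support ordering. -/
def IsWellSupported {S : Type*} (f : Set S → Set S) (X : Set S) : Prop :=
  ∃ r : S → S → Prop,
    (∀ x y, r x y → x ∈ X ∧ y ∈ X) ∧ WellFounded r ∧ IsSupportOrdering f X r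

open OrdinalApprox

theorem lfp_eq_union_wellSupported {S : Type*} (f : Set S → Set S) (hf : Monotone f) :
    OrderHom.lfp ⟨f, hf⟩ = sSup {X : Set S | IsWellSupported f X} := by
  set F : Set S →o Set S := ⟨f, hf⟩ with hF
  have hlfp_fix : f (OrderHom.lfp F) = OrderHom.lfp F := F.map_lfp
  -- membership characterization of the approximants starting at ⊥
  have mem_iff : ∀ (a : Ordinal) (x : S),
      x ∈ lfpApprox F ⊥ a ↔ ∃ b < a, x ∈ f (lfpApprox F ⊥ b) := by
    intro a x
    rw [lfpApprox]
    simp only [Set.bot_eq_empty, Set.sup_eq_union, Set.empty_union, Set.iSup_eq_iUnion,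
      Set.mem_iUnion, exists_prop]
    rfl
  have happrox_le : ∀ b : Ordinal, lfpApprox F ⊥ b ≤ OrderHom.lfp F := fun b =>
    lfpApprox_le_of_mem_fixedPoints F F.isFixedPt_lfp bot_le b
  apply le_antisymm
  · -- lfp ⊆ union : lfp is well-supported
    have hcover : OrderHom.lfp F = lfpApprox F ⊥ ((Order.succ (Cardinal.mk (Set S))).ord) :=
      (lfpApprox_ord_eq_lfp F).symm
    -- rank of an element
    set rk : S → Ordinal := fun x => sInf {b : Ordinal | x ∈ f (lfpApprox F ⊥ b)} with hrk
    have hne : ∀ x ∈ OrderHom.lfp F, {b : Ordinal | x ∈ f (lfpApprox F ⊥ b)}.Nonempty := by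
      intro x hx
      rw [hcover, mem_iff] at hx
      rcases hx with ⟨b, _, hb⟩
      exact ⟨b, hb⟩
    have hrk_mem : ∀ x ∈ OrderHom.lfp F, x ∈ f (lfpApprox F ⊥ (rk x)) := by
      intro x hx
      exact csInf_mem (hne x hx)
    have hrk_lt : ∀ x, ∀ y, x ∈ OrderHom.lfp F → y ∈ lfpApprox F ⊥ (rk x) → rk y < rk x := by
      intro x y hx hy
      rw [mem_iff] at hy
      rcases hy with ⟨b, hb, hyb⟩
      exact lt_of_le_of_lt (csInf_le' hyb) hb
    refine le_sSup ?_
    refine ⟨fun a b => a ∈ OrderHom.lfp F ∧ b ∈ OrderHom.lfp F ∧ rk a < rk b, ?_, ?_, ?_⟩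
    · exact fun a b h => ⟨h.1, h.2.1⟩
    · exact Subrelation.wf (fun h => h.2.2) (InvImage.wf rk Ordinal.lt_wf)
    · intro x hx
      have hsub : lfpApprox F ⊥ (rk x) ⊆
          {x' ∈ (OrderHom.lfp F : Set S) | x' ∈ OrderHom.lfp F ∧ x ∈ OrderHom.lfp F ∧ rk x' < rk x} := by
        intro y hy
        have hylfp : y ∈ OrderHom.lfp F := happrox_le (rk x) hy
        exact ⟨hylfp, hylfp, hx, hrk_lt x y hx hy⟩
      exact hf hsub (hrk_mem x hx)
  · -- union ⊆ lfp : every well-supported set is ⊆ lfp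
    apply sSup_le
    rintro X ⟨r, _hdom, hwf, hsupp⟩
    have key : ∀ x, x ∈ X → x ∈ OrderHom.lfp F := by
      intro x
      induction x using hwf.induction with
      | _ x ih =>
        intro hx
        have hmem := hsupp x hx
        have hsub : {x' ∈ X | r x' x} ⊆ OrderHom.lfp F := fun y hy => ih y hy.2 hy.1
        have : x ∈ f (OrderHom.lfp F) := hf hsub hmem
        rwa [hlfp_fix] at this
    exact key
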